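/- Let X and Y be real vector spaces, D ⊆ X a convex set, and A : D → Y an operator of type ql. Then for every finite collection of points x₁, x₂, …, xₙ ∈ D and every x in the convex hull of {x₁, …, xₙ}, the image A(x) lies in the convex hull of {A(x₁), …, A(xₙ)}. -/

import Mathlib

theorem stmt_0 {X Y : Type*} [AddCommGroup X] [Module ℝ X] [AddCommGroup Y] [Module ℝ Y]
    (D : Set X) (hD : Convex ℝ D) (A : X → Y)
    (hql : ∀ x ∈ D, ∀ y ∈ D, ∀ z ∈ segment ℝ x y, z ∈ D → A z ∈ segment ℝ (A x) (A y))
    (s : Finset X) (hs : (s : Set X) ⊆ D)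
    (x : X) (hx : x ∈ convexHull ℝ (s : Set X)) :
    A x ∈ convexHull ℝ (A '' (s : Set X)) := by
  classical
  induction s using Finset.induction_on generalizing x with
  | empty => simp at hx
  | @insert a s ha ih =>
    rw [Finset.coe_insert] at hx hs ⊢
    have haD : a ∈ D := hs (Set.mem_insert a s)
    have hsD : (s : Set X) ⊆ D := fun y hy => hs (Set.mem_insert_of_mem a hy)
    rcases s.eq_empty_or_nonempty with rfl | hne
    · have : (insert a (∅ : Set X)) = {a} := by simp
      rw [Finset.coe_empty, this, convexHull_singleton, Set.mem_singleton_iff] at hx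
      subst hx
      exact subset_convexHull ℝ _ ⟨x, by simp, rfl⟩
    · rw [convexHull_insert hne.to_set] at hx
      obtain ⟨w, hw, z, hz, hxz⟩ := mem_convexJoin.mp hx
      rw [Set.mem_singleton_iff] at hw
      subst hw
      have hzD : z ∈ D := convexHull_min hsD hD hz
      have hxD : x ∈ D := convexHull_min hs hD
        (by rw [convexHull_insert hne.to_set]; exact mem_convexJoin.2 ⟨w, rfl, z, hz, hxz⟩)
      have hAx : A x ∈ segment ℝ (A w) (A z) := hql w haD z hzD x hxz hxD
      have hAa : A w ∈ convexHull ℝ (A '' insert w (s : Set X)) :=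
        subset_convexHull ℝ _ ⟨w, Set.mem_insert w _, rfl⟩
      have hAz : A z ∈ convexHull ℝ (A '' insert w (s : Set X)) :=
        convexHull_mono (Set.image_mono (Set.subset_insert w _)) (ih hsD z hz)
      exact (convex_convexHull ℝ _).segment_subset hAa hAz hAx
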